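/- arXiv:quant-ph/0507109 — 3 statements merged into one kernel-verified Lean document; each statement's English description precedes it below -/
import Mathlib

section
/- Let p ≥ 1 be a natural number and let L, M, γ, δ be positive reals and 0 < ε < 1. Set c = ((2+ε)/3)^{2/p}, n = ⌈ −log₂( sin²(πδ/(2(L+δ))) · (1 − c) ) ⌉, λ = max{ 2^{n−2}/(γ(L+δ)), 3·4^{n−2}·π·M/(√5·(L+δ)²·(1−ε)) }, μ = 1/(2λ(L+δ)), and ν = (1−ε)/(6πλ). Then n ≥ 1, λ, μ, ν > 0, and the following five inequalities hold: (i) 4^{n−1}·π·λ·M·μ²/√5 ≤ (1−ε)/3; (ii) 2πλν ≤ (1−ε)/3; (iii) 2^{n−1}·μ ≤ γ; (iv) 1/(2λμ) ≥ L + δ; (v) 1/sin(πλμδ) ≤ √( 2^n · (1 − c) ). -/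
open Real

theorem stmt_1 (p : ℕ) (hp : 1 ≤ p) (L M γ δ ε : ℝ)
    (hL : 0 < L) (hM : 0 < M) (hγ : 0 < γ) (hδ : 0 < δ) (hε0 : 0 < ε) (hε1 : ε < 1)
    (c : ℝ) (hc : c = ((2 + ε) / 3) ^ ((2 : ℝ) / (p : ℝ)))
    (n : ℤ)
    (hn : n = ⌈-Real.logb 2 (Real.sin (π * δ / (2 * (L + δ))) ^ 2 * (1 - c))⌉)
    (lam : ℝ)
    (hlam : lam = max ((2 : ℝ) ^ (n - 2) / (γ * (L + δ)))
      (3 * (4 : ℝ) ^ (n - 2) * π * M / (Real.sqrt 5 * (L + δ) ^ 2 * (1 - ε))))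
    (μ : ℝ) (hμ : μ = 1 / (2 * lam * (L + δ)))
    (ν : ℝ) (hν : ν = (1 - ε) / (6 * π * lam)) :
    1 ≤ n ∧ 0 < lam ∧ 0 < μ ∧ 0 < ν ∧
    (4 : ℝ) ^ (n - 1) * π * lam * M * μ ^ 2 / Real.sqrt 5 ≤ (1 - ε) / 3 ∧
    2 * π * lam * ν ≤ (1 - ε) / 3 ∧
    (2 : ℝ) ^ (n - 1) * μ ≤ γ ∧
    L + δ ≤ 1 / (2 * lam * μ) ∧
    1 / Real.sin (π * lam * μ * δ) ≤ Real.sqrt ((2 : ℝ) ^ n * (1 - c)) := by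
  have hA : 0 < L + δ := by positivity
  have hπ : 0 < π := Real.pi_pos
  have h1ε : 0 < 1 - ε := by linarith
  have hp' : (0:ℝ) < (p:ℝ) := by exact_mod_cast hp
  have hc0 : 0 < c := by rw [hc]; positivity
  have hc1 : c < 1 := by
    rw [hc]
    apply Real.rpow_lt_one (by linarith) (by linarith) (by positivity)
  have h1c : 0 < 1 - c := by linarith
  have hθ0 : 0 < π * δ / (2 * (L + δ)) := by positivity
  have hθ2 : π * δ / (2 * (L + δ)) < π / 2 := by
    rw [div_lt_div_iff₀ (by positivity) (by norm_num)]
    nlinarith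
  set θ := π * δ / (2 * (L + δ)) with hθdef
  have hs0 : 0 < Real.sin θ := Real.sin_pos_of_pos_of_lt_pi hθ0 (by nlinarith)
  have hs1 : Real.sin θ ≤ 1 := Real.sin_le_one _
  set x := Real.sin θ ^ 2 * (1 - c) with hxdef
  have hx0 : 0 < x := by positivity
  have hs2 : Real.sin θ ^ 2 ≤ 1 := by nlinarith
  have hx1 : x < 1 := by nlinarith [mul_le_mul_of_nonneg_right hs2 h1c.le]
  have hn1 : 1 ≤ n := by
    rw [hn, Int.one_le_ceil_iff]
    have := Real.logb_neg (by norm_num : (1:ℝ) < 2) hx0 hx1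
    linarith
  have h5 : (0:ℝ) < Real.sqrt 5 := Real.sqrt_pos.mpr (by norm_num)
  have h2n2 : (0:ℝ) < (2:ℝ) ^ (n - 2) := by positivity
  have h4n2 : (0:ℝ) < (4:ℝ) ^ (n - 2) := by positivity
  have hlam0 : 0 < lam := hlam ▸ lt_of_lt_of_le (by positivity) (le_max_left _ _)
  have hμ0 : 0 < μ := by rw [hμ]; positivity
  have hν0 : 0 < ν := by rw [hν]; positivity
  have hmax1 : (2:ℝ) ^ (n - 2) / (γ * (L + δ)) ≤ lam := hlam ▸ le_max_left _ _
  have hmax2 : 3 * (4:ℝ) ^ (n - 2) * π * M / (Real.sqrt 5 * (L + δ) ^ 2 * (1 - ε)) ≤ lam :=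
    hlam ▸ le_max_right _ _
  have hmax1' : (2:ℝ) ^ (n - 2) ≤ lam * (γ * (L + δ)) := (div_le_iff₀ (by positivity)).mp hmax1
  have hmax2' : 3 * (4:ℝ) ^ (n - 2) * π * M ≤ lam * (Real.sqrt 5 * (L + δ) ^ 2 * (1 - ε)) :=
    (div_le_iff₀ (by positivity)).mp hmax2
  have h2pow : (2:ℝ) ^ (n - 1) = 2 * (2:ℝ) ^ (n - 2) := by
    rw [show n - 1 = (n - 2) + 1 by ring, zpow_add_one₀ (by norm_num : (2:ℝ) ≠ 0)]; ring
  have h4pow : (4:ℝ) ^ (n - 1) = 4 * (4:ℝ) ^ (n - 2) := by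
    rw [show n - 1 = (n - 2) + 1 by ring, zpow_add_one₀ (by norm_num : (4:ℝ) ≠ 0)]; ring
  refine ⟨hn1, hlam0, hμ0, hν0, ?_, ?_, ?_, ?_, ?_⟩
  · -- (i)
    have hLHS : (4:ℝ) ^ (n - 1) * π * lam * M * μ ^ 2 / Real.sqrt 5
        = (4:ℝ) ^ (n - 2) * π * M / (lam * (L + δ) ^ 2 * Real.sqrt 5) := by
      rw [h4pow, hμ]
      field_simp
      ring
    rw [hLHS, div_le_div_iff₀ (by positivity) (by norm_num)]
    linarith [hmax2']
  · -- (ii)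
    have : 2 * π * lam * ν = (1 - ε) / 3 := by
      rw [hν]; field_simp; ring
    linarith
  · -- (iii)
    have hLHS : (2:ℝ) ^ (n - 1) * μ = (2:ℝ) ^ (n - 2) / (lam * (L + δ)) := by
      rw [h2pow, hμ]; field_simp
    rw [hLHS, div_le_iff₀ (by positivity)]
    linarith [hmax1']
  · -- (iv)
    have h4 : 1 / (2 * lam * μ) = L + δ := by
      rw [hμ]; field_simp
    linarith
  · -- (v)
    have hang : π * lam * μ * δ = θ := by
      rw [hμ, hθdef]; field_simp
    rw [hang]
    have hle : -Real.logb 2 x ≤ (n:ℝ) := by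
      rw [hn]; exact_mod_cast Int.le_ceil _
    have h2n : 1 / x ≤ (2:ℝ) ^ n := by
      have h := Real.rpow_le_rpow_of_exponent_le (by norm_num : (1:ℝ) ≤ 2) hle
      rw [Real.rpow_neg (by norm_num), Real.rpow_logb (by norm_num) (by norm_num) hx0,
        Real.rpow_intCast] at h
      rw [one_div]
      exact h
    have key : 1 / Real.sin θ ^ 2 ≤ (2:ℝ) ^ n * (1 - c) := by
      have heq : 1 / Real.sin θ ^ 2 = (1 - c) * (1 / x) := by
        rw [hxdef]; field_simp
      rw [heq]
      calc (1 - c) * (1 / x) ≤ (1 - c) * (2:ℝ) ^ n :=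
            mul_le_mul_of_nonneg_left h2n h1c.le
        _ = (2:ℝ) ^ n * (1 - c) := by ring
    have := Real.sqrt_le_sqrt key
    rwa [one_div, Real.sqrt_inv, Real.sqrt_sq hs0.le, ← one_div] at this
end

section
/- For all natural numbers N ≥ 1 and p ≥ 1, Σ_{h ∈ (Fin N)^p} ( Σ_{m=1}^{p} (h_m − (N−1)/2)² )² ≤ p² · N^{p+4} / 80. -/
open Finset

lemma sum_sq_shift (c : ℝ) (N : ℕ) :
    ∑ i ∈ range N, ((i:ℝ) - c)^2 =
      (N:ℝ)*(N-1)*(2*N-1)/6 - c*N*(N-1) + N*c^2 := by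
  induction N with
  | zero => simp
  | succ n ih => rw [sum_range_succ, ih]; push_cast; ring

lemma sum_pow4_shift (c : ℝ) (N : ℕ) :
    ∑ i ∈ range N, ((i:ℝ) - c)^4 =
      (N:ℝ)*(N-1)*(2*N-1)*(3*(N:ℝ)^2-3*N-1)/30
      - 4*c*((N:ℝ)^2*(N-1)^2/4)
      + 6*c^2*((N:ℝ)*(N-1)*(2*N-1)/6)
      - 4*c^3*((N:ℝ)*(N-1)/2) + N*c^4 := by
  induction N with
  | zero => simp
  | succ n ih => rw [sum_range_succ, ih]; push_cast; ring


lemma sum_pi_prod {p N : ℕ} (F : Fin p → Fin N → ℝ) :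
    ∑ h : Fin p → Fin N, ∏ m, F m (h m) = ∏ m, ∑ i, F m i := by
  rw [Finset.prod_univ_sum, Fintype.piFinset_univ]

lemma prod_two_point {p : ℕ} (f : Fin p → ℝ) (m : Fin p) (a b : ℝ)
    (hm : f m = a) (ho : ∀ k, k ≠ m → f k = b) :
    ∏ k, f k = a * b ^ (p - 1) := by
  rw [← Finset.mul_prod_erase univ f (Finset.mem_univ m), hm]
  congr 1
  rw [Finset.prod_congr rfl (fun k hk => ho k (Finset.ne_of_mem_erase hk)),
    Finset.prod_const, Finset.card_erase_of_mem (Finset.mem_univ m),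
    Finset.card_univ, Fintype.card_fin]

lemma prod_three_point {p : ℕ} (f : Fin p → ℝ) (m m' : Fin p) (hmm : m' ≠ m) (a b c : ℝ)
    (hm : f m = a) (hm' : f m' = b) (ho : ∀ k, k ≠ m → k ≠ m' → f k = c) :
    ∏ k, f k = a * b * c ^ (p - 2) := by
  have hmem : m' ∈ univ.erase m := Finset.mem_erase.2 ⟨hmm, Finset.mem_univ m'⟩
  rw [← Finset.mul_prod_erase univ f (Finset.mem_univ m), hm,
    ← Finset.mul_prod_erase _ f hmem, hm', ← mul_assoc]
  congr 1
  rw [Finset.prod_congr rfl (fun k hk => ho k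
      (Finset.ne_of_mem_erase (Finset.mem_of_mem_erase hk)) (Finset.ne_of_mem_erase hk)),
    Finset.prod_const, Finset.card_erase_of_mem hmem,
    Finset.card_erase_of_mem (Finset.mem_univ m), Finset.card_univ, Fintype.card_fin]
  congr 1

lemma sumA {p N : ℕ} (g : Fin N → ℝ) (m : Fin p) :
    ∑ h : Fin p → Fin N, g (h m) * g (h m) =
      (∑ i, g i * g i) * (N:ℝ)^(p-1) := by
  have key := sum_pi_prod (fun (k : Fin p) (i : Fin N) => if k = m then g i * g i else 1)
  calc ∑ h : Fin p → Fin N, g (h m) * g (h m)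
      = ∑ h : Fin p → Fin N, ∏ k, (if k = m then g (h k) * g (h k) else 1) := by
        refine Finset.sum_congr rfl fun h _ => ?_
        rw [prod_two_point _ m (g (h m) * g (h m)) 1 (by simp) (fun k hk => by simp [hk]),
          one_pow, mul_one]
    _ = ∏ k, ∑ i, (if k = m then g i * g i else 1) := key
    _ = (∑ i, g i * g i) * (N:ℝ)^(p-1) := by
        refine prod_two_point _ m _ _ ?_ ?_
        · simp
        · intro k hk; simp [hk, Finset.card_univ]

lemma sumB {p N : ℕ} (g : Fin N → ℝ) (m m' : Fin p) (hmm : m' ≠ m) :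
    ∑ h : Fin p → Fin N, g (h m) * g (h m') =
      (∑ i, g i) * (∑ i, g i) * (N:ℝ)^(p-2) := by
  have key := sum_pi_prod (fun (k : Fin p) (i : Fin N) =>
    if k = m then g i else if k = m' then g i else 1)
  calc ∑ h : Fin p → Fin N, g (h m) * g (h m')
      = ∑ h : Fin p → Fin N, ∏ k, (if k = m then g (h k) else if k = m' then g (h k) else 1) := by
        refine Finset.sum_congr rfl fun h _ => ?_
        rw [prod_three_point _ m m' hmm (g (h m)) (g (h m')) 1 (by simp)
          (by simp [hmm]) (fun k hk hk' => by simp [hk, hk']), one_pow, mul_one]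
    _ = ∏ k, ∑ i, (if k = m then g i else if k = m' then g i else 1) := key
    _ = (∑ i, g i) * (∑ i, g i) * (N:ℝ)^(p-2) := by
        refine prod_three_point _ m m' hmm _ _ _ ?_ ?_ ?_
        · simp
        · simp [hmm]
        · intro k hk hk'; simp [hk, hk', Finset.card_univ]

theorem stmt_5 (N p : ℕ) (hN : 1 ≤ N) (hp : 1 ≤ p) :
    ∑ h : Fin p → Fin N, (∑ m : Fin p, (((h m : ℕ) : ℝ) - ((N : ℝ) - 1) / 2) ^ 2) ^ 2 ≤
      (p : ℝ) ^ 2 * (N : ℝ) ^ (p + 4) / 80 := by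
  classical
  set g : Fin N → ℝ := fun i => (((i : ℕ) : ℝ) - ((N : ℝ) - 1) / 2) ^ 2 with hg
  set SA : ℝ := ∑ i, g i * g i with hSAdef
  set SB : ℝ := ∑ i, g i with hSBdef
  have hN1 : (1:ℝ) ≤ (N:ℝ) := by exact_mod_cast hN
  have hN0 : (0:ℝ) ≤ (N:ℝ) := by linarith
  have hSA : SA = (N:ℝ)*((N:ℝ)^2-1)*(3*(N:ℝ)^2-7)/240 := by
    have e : SA = ∑ i ∈ range N, ((i:ℝ) - ((N:ℝ)-1)/2)^4 := by
      rw [hSAdef, ← Fin.sum_univ_eq_sum_range (fun i => ((i:ℝ) - ((N:ℝ)-1)/2)^4)]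
      exact Finset.sum_congr rfl fun i _ => by rw [hg]; ring
    rw [e, sum_pow4_shift]; ring
  have hSB : SB = (N:ℝ)*((N:ℝ)^2-1)/12 := by
    have e : SB = ∑ i ∈ range N, ((i:ℝ) - ((N:ℝ)-1)/2)^2 := by
      rw [hSBdef, ← Fin.sum_univ_eq_sum_range (fun i => ((i:ℝ) - ((N:ℝ)-1)/2)^2)]
    rw [e, sum_sq_shift]; ring
  have step0 : ∑ h : Fin p → Fin N, (∑ m : Fin p, (((h m : ℕ) : ℝ) - ((N : ℝ) - 1) / 2) ^ 2) ^ 2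
      = ∑ h : Fin p → Fin N, ∑ m : Fin p, ∑ m' : Fin p, g (h m) * g (h m') := by
    refine Finset.sum_congr rfl fun h _ => ?_
    rw [sq, Finset.sum_mul_sum]
  have step1 : ∑ h : Fin p → Fin N, ∑ m : Fin p, ∑ m' : Fin p, g (h m) * g (h m')
      = ∑ m : Fin p, ∑ m' : Fin p, ∑ h : Fin p → Fin N, g (h m) * g (h m') := by
    rw [Finset.sum_comm]
    exact Finset.sum_congr rfl fun m _ => Finset.sum_comm
  have step2 : ∀ m : Fin p, ∑ m' : Fin p, ∑ h : Fin p → Fin N, g (h m) * g (h m')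
      = SA * (N:ℝ)^(p-1) + ((p:ℝ) - 1) * (SB * SB * (N:ℝ)^(p-2)) := by
    intro m
    rw [← Finset.add_sum_erase univ _ (Finset.mem_univ m), sumA]
    congr 1
    rw [Finset.sum_congr rfl (fun m' hm' => sumB g m m' (Finset.ne_of_mem_erase hm')),
      Finset.sum_const, Finset.card_erase_of_mem (Finset.mem_univ m),
      Finset.card_univ, Fintype.card_fin, nsmul_eq_mul]
    congr 1
    rw [Nat.cast_sub hp, Nat.cast_one]
  have hA : SA ≤ (N:ℝ)^5/80 := by rw [hSA]; nlinarith [sq_nonneg ((N:ℝ)^2 - 1), hN1, hN0]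
  have hB : SB * SB ≤ (N:ℝ)^6/80 := by
    rw [hSB]
    have h1 : (0:ℝ) ≤ (N:ℝ)^2 - 1 := by nlinarith
    nlinarith [sq_nonneg ((N:ℝ)^2-1), mul_nonneg hN0 h1]
  have e1 : (N:ℝ)^5/80 * (N:ℝ)^(p-1) = (N:ℝ)^(p+4)/80 := by
    rw [div_mul_eq_mul_div, ← pow_add]
    congr 2
    omega
  have t1 : SA * (N:ℝ)^(p-1) ≤ (N:ℝ)^(p+4)/80 := by
    rw [← e1]
    exact mul_le_mul_of_nonneg_right hA (pow_nonneg hN0 _)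
  have t2 : ((p:ℝ) - 1) * (SB * SB * (N:ℝ)^(p-2)) ≤ ((p:ℝ) - 1) * ((N:ℝ)^(p+4)/80) := by
    rcases Nat.lt_or_ge p 2 with h2 | h2
    · have : p = 1 := by omega
      subst this
      norm_num
    · have e2 : (N:ℝ)^6/80 * (N:ℝ)^(p-2) = (N:ℝ)^(p+4)/80 := by
        rw [div_mul_eq_mul_div, ← pow_add]
        congr 2
        omega
      have hp1 : (0:ℝ) ≤ (p:ℝ) - 1 := by
        have : (1:ℝ) ≤ (p:ℝ) := by exact_mod_cast hp
        linarith
      refine mul_le_mul_of_nonneg_left ?_ hp1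
      rw [← e2]
      exact mul_le_mul_of_nonneg_right hB (pow_nonneg hN0 _)
  calc ∑ h : Fin p → Fin N, (∑ m : Fin p, (((h m : ℕ) : ℝ) - ((N : ℝ) - 1) / 2) ^ 2) ^ 2
      = ∑ m : Fin p, (SA * (N:ℝ)^(p-1) + ((p:ℝ) - 1) * (SB * SB * (N:ℝ)^(p-2))) := by
        rw [step0, step1]
        exact Finset.sum_congr rfl fun m _ => step2 m
    _ = (p:ℝ) * (SA * (N:ℝ)^(p-1) + ((p:ℝ) - 1) * (SB * SB * (N:ℝ)^(p-2))) := by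
        rw [Finset.sum_const, Finset.card_univ, Fintype.card_fin, nsmul_eq_mul]
    _ ≤ (p:ℝ) * ((N:ℝ)^(p+4)/80 + ((p:ℝ) - 1) * ((N:ℝ)^(p+4)/80)) := by
        have hp0 : (0:ℝ) ≤ (p:ℝ) := Nat.cast_nonneg p
        exact mul_le_mul_of_nonneg_left (add_le_add t1 t2) hp0
    _ = (p:ℝ)^2 * (N:ℝ)^(p+4)/80 := by ring
end

section
/- Let N ≥ 1 and p ≥ 1 be natural numbers, v ∈ ℝ^p, and let d be a real with 0 < d ≤ 1/2 and N·sin²(πd) ≥ 1. For g ∈ (Fin N)^p define χ(g) = N^{−p} · Σ_{h ∈ (Fin N)^p} exp(2πi·((g·h)/N + v·h)). Then Σ_{g} |χ(g)|² ≥ (1 − 1/(N·sin²(πd)))^p, where the sum runs over all g ∈ (Fin N)^p such that for every coordinate m the distance from g_m/N + v_m to the nearest integer is strictly less than d. -/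
open Real Finset
open scoped Classical

noncomputable def ee (t : ℝ) : ℂ := Complex.exp (2 * π * Complex.I * t)

lemma ee_pow (t : ℝ) (n : ℕ) : ee t ^ n = ee (n * t) := by
  rw [ee, ee, ← Complex.exp_nat_mul]
  congr 1
  push_cast
  ring

lemma ee_int (k : ℤ) : ee k = 1 := by
  rw [ee, Complex.exp_eq_one_iff]
  exact ⟨k, by push_cast; ring⟩

lemma two_pi_I_ne_zero : (2 * (π : ℂ) * Complex.I) ≠ 0 :=
  mul_ne_zero (mul_ne_zero two_ne_zero (Complex.ofReal_ne_zero.2 Real.pi_ne_zero))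
    Complex.I_ne_zero

lemma ee_ne_one {t : ℝ} (h : ∀ k : ℤ, t ≠ k) : ee t ≠ 1 := by
  intro hc
  rw [ee, Complex.exp_eq_one_iff] at hc
  obtain ⟨n, hn⟩ := hc
  have h3 : (2 * (π : ℂ) * Complex.I) * t = (2 * (π : ℂ) * Complex.I) * n := by
    linear_combination hn
  have h4 := mul_left_cancel₀ two_pi_I_ne_zero h3
  exact h n (by exact_mod_cast h4)

lemma ee_conj (t : ℝ) : (starRingEnd ℂ) (ee t) = ee (-t) := by
  rw [ee, ee, ← Complex.exp_conj]
  congr 1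
  simp only [map_mul, Complex.conj_I, Complex.conj_ofReal, map_ofNat]
  push_cast
  ring

lemma ee_add (s t : ℝ) : ee (s + t) = ee s * ee t := by
  rw [ee, ee, ee, ← Complex.exp_add]
  congr 1
  push_cast
  ring

lemma ee_sum {ι : Type*} (s : Finset ι) (f : ι → ℝ) :
    ee (∑ i ∈ s, f i) = ∏ i ∈ s, ee (f i) := by
  classical
  induction s using Finset.induction with
  | empty => simp [ee]
  | insert _ _ h ih =>
      rw [Finset.sum_insert h, Finset.prod_insert h, ee_add, ih]

lemma ee_abs (t : ℝ) : ‖ee t‖ = 1 := by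
  rw [ee, Complex.norm_exp]
  simp [Complex.mul_re]

lemma ee_re (t : ℝ) : (ee t).re = Real.cos (2 * π * t) := by
  have : ee t = Complex.exp ((2 * π * t : ℝ) * Complex.I) := by
    rw [ee]; congr 1; push_cast; ring
  rw [this, Complex.exp_ofReal_mul_I_re]

lemma ee_im (t : ℝ) : (ee t).im = Real.sin (2 * π * t) := by
  have : ee t = Complex.exp ((2 * π * t : ℝ) * Complex.I) := by
    rw [ee]; congr 1; push_cast; ring
  rw [this, Complex.exp_ofReal_mul_I_im]

lemma ee_sub_one_sq (t : ℝ) :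
    ‖ee t - 1‖ ^ 2 = 4 * Real.sin (π * t) ^ 2 := by
  rw [Complex.sq_norm, Complex.normSq_apply]
  simp only [Complex.sub_re, Complex.sub_im, Complex.one_re, Complex.one_im, ee_re, ee_im]
  have h1 : Real.sin (π * t) ^ 2 + Real.cos (π * t) ^ 2 = 1 := Real.sin_sq_add_cos_sq _
  have h2 : Real.cos (2 * π * t) = 1 - 2 * Real.sin (π * t) ^ 2 := by
    have := Real.cos_two_mul (π * t)
    rw [show 2 * π * t = 2 * (π * t) by ring] at *
    nlinarith
  have h3 : Real.sin (2 * π * t) ^ 2 + Real.cos (2 * π * t) ^ 2 = 1 :=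
    Real.sin_sq_add_cos_sq _
  nlinarith

noncomputable def SS (N : ℕ) (t : ℝ) : ℂ := ∑ h : Fin N, ee (t * h)

lemma SS_geom (N : ℕ) {t : ℝ} (ht : ee t ≠ 1) :
    SS N t = (ee t ^ N - 1) / (ee t - 1) := by
  rw [SS, ← geom_sum_eq ht N, ← Fin.sum_univ_eq_sum_range (fun i => ee t ^ i) N]
  refine Finset.sum_congr rfl fun h _ => ?_
  rw [ee_pow]
  congr 1
  ring

/-- distance-to-integers lower bound turns into a sine bound -/
lemma sin_sq_ge {θ d : ℝ} (hd0 : 0 < d) (hd1 : d ≤ 1 / 2)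
    (hθ : ∀ k : ℤ, d ≤ |θ - k|) :
    Real.sin (π * d) ^ 2 ≤ Real.sin (π * θ) ^ 2 := by
  set n : ℤ := round θ with hn
  set r : ℝ := θ - n with hr
  have hr2 : |r| ≤ 1 / 2 := abs_sub_round θ
  have hrd : d ≤ |r| := hθ n
  have hθeq : θ = r + n := by rw [hr]; ring
  have hsin : Real.sin (π * θ) ^ 2 = Real.sin (π * r) ^ 2 := by
    rw [hθeq, show π * (r + n) = π * r + n * π by ring, Real.sin_add_int_mul_pi, mul_pow]
    have hone : ((-1 : ℝ) ^ n) ^ 2 = 1 := by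
      rcases Int.even_or_odd n with he | ho
      · rw [he.neg_one_zpow]; norm_num
      · rw [ho.neg_one_zpow]; norm_num
    rw [hone, one_mul]
  rw [hsin]
  have habs : Real.sin (π * r) ^ 2 = Real.sin (π * |r|) ^ 2 := by
    rcases abs_cases r with ⟨h1, _⟩ | ⟨h1, _⟩
    · rw [h1]
    · rw [h1, show π * -r = -(π * r) by ring, Real.sin_neg, neg_pow]
      ring
  rw [habs]
  have hπd : 0 ≤ Real.sin (π * d) := by
    apply Real.sin_nonneg_of_nonneg_of_le_pi
    · positivity
    · nlinarith [Real.pi_pos]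
  have hmono : Real.sin (π * d) ≤ Real.sin (π * |r|) := by
    apply Real.sin_le_sin_of_le_of_le_pi_div_two
    · nlinarith [Real.pi_pos]
    · nlinarith [Real.pi_pos]
    · nlinarith [Real.pi_pos]
  nlinarith


lemma ee_zero : ee 0 = 1 := by simp [ee]

lemma SS_bad {N : ℕ} (hN : 1 ≤ N) {θ d : ℝ} (hd0 : 0 < d) (hd1 : d ≤ 1 / 2)
    (hθ : ∀ k : ℤ, d ≤ |θ - k|) :
    ‖SS N θ‖ ^ 2 ≤ 1 / Real.sin (π * d) ^ 2 := by
  have hne : ee θ ≠ 1 := by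
    refine ee_ne_one fun k hk => ?_
    have := hθ k
    rw [hk, sub_self, abs_zero] at this
    linarith
  have hsd : 0 < Real.sin (π * d) :=
    Real.sin_pos_of_pos_of_lt_pi (by positivity) (by nlinarith [Real.pi_pos])
  rw [SS_geom N hne, norm_div, div_pow]
  have hnum : ‖ee θ ^ N - 1‖ ^ 2 ≤ 4 := by
    have h1 : ‖ee θ ^ N - 1‖ ≤ 2 := by
      calc ‖ee θ ^ N - 1‖ = ‖ee θ ^ N + (-1)‖ := by ring_nf
        _ ≤ ‖ee θ ^ N‖ + ‖-1‖ := norm_add_le _ _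
        _ = 2 := by simp [norm_pow, ee_abs]; norm_num
    nlinarith [norm_nonneg (ee θ ^ N - 1)]
  have hden : 4 * Real.sin (π * d) ^ 2 ≤ ‖ee θ - 1‖ ^ 2 := by
    rw [ee_sub_one_sq]
    have := sin_sq_ge hd0 hd1 hθ
    nlinarith
  have hdpos : (0 : ℝ) < ‖ee θ - 1‖ ^ 2 := by nlinarith
  rw [div_le_div_iff₀ hdpos (by positivity)]
  nlinarith [norm_nonneg (ee θ ^ N - 1)]

lemma orth {N : ℕ} (hN : 1 ≤ N) (a b : Fin N) :
    ∑ x : Fin N, ee ((x : ℝ) * (((a : ℝ) - (b : ℝ)) / N)) = if a = b then (N : ℂ) else 0 := by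
  have hNpos : (0 : ℝ) < N := by exact_mod_cast hN
  by_cases hab : a = b
  · subst hab
    simp [ee, Finset.card_univ]
  · rw [if_neg hab]
    set c : ℝ := ((a : ℝ) - (b : ℝ)) / N with hc
    have hz1 : ee c ≠ 1 := by
      refine ee_ne_one fun k hk => ?_
      have h1 : (a : ℝ) - (b : ℝ) = k * N := by
        rw [hc] at hk
        field_simp at hk
        linarith
      have h2 : (a : ℤ) - (b : ℤ) = k * N := by exact_mod_cast h1
      have ha := a.2
      have hb := b.2
      have hane : (a : ℤ) ≠ (b : ℤ) := by
        simpa [Fin.ext_iff] using hab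
      have hNz : (0 : ℤ) < N := by exact_mod_cast hN
      have hk1 : k < 1 := by nlinarith [a.2, b.2, Int.ofNat_nonneg (b : ℕ)]
      have hk2 : -1 < k := by nlinarith [a.2, b.2]
      have hk0 : k = 0 := by omega
      rw [hk0, zero_mul] at h2
      exact hane (by omega)
    have hzN : ee c ^ N = 1 := by
      rw [ee_pow]
      have : (N : ℝ) * c = ((a : ℤ) - (b : ℤ) : ℤ) := by
        rw [hc]
        push_cast
        field_simp
      rw [this, ee_int]
    calc ∑ x : Fin N, ee ((x : ℝ) * c) = ∑ x : Fin N, ee c ^ (x : ℕ) := by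
          exact Finset.sum_congr rfl fun x _ => (ee_pow c x).symm ▸ rfl
      _ = ∑ i ∈ Finset.range N, ee c ^ i := Fin.sum_univ_eq_sum_range _ N
      _ = (ee c ^ N - 1) / (ee c - 1) := geom_sum_eq hz1 N
      _ = 0 := by rw [hzN]; simp

lemma parseval (N : ℕ) (hN : 1 ≤ N) (t : ℝ) :
    ∑ x : Fin N, ‖SS N ((x : ℝ) / N + t)‖ ^ 2 = (N : ℝ) * N := by
  have key : ∑ x : Fin N, ((‖SS N ((x : ℝ) / N + t)‖ ^ 2 : ℝ) : ℂ)
      = ((N : ℝ) * N : ℝ) := by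
    have e1 : ∀ z : ℂ, ((‖z‖ ^ 2 : ℝ) : ℂ) = z * (starRingEnd ℂ) z := fun z => by
      rw [Complex.mul_conj, Complex.sq_norm]
    simp_rw [e1, SS, map_sum, ee_conj, Finset.sum_mul_sum]
    have inner : ∀ a b : Fin N,
        ∑ x : Fin N, ee (((x : ℝ) / N + t) * a) * ee (-((((x : ℝ)) / N + t) * b))
        = ee (t * ((a : ℝ) - b)) * (if a = b then (N : ℂ) else 0) := by
      intro a b
      calc ∑ x : Fin N, ee (((x : ℝ) / N + t) * a) * ee (-((((x : ℝ)) / N + t) * b))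
          = ∑ x : Fin N, ee (t * ((a : ℝ) - b)) * ee ((x : ℝ) * (((a : ℝ) - b) / N)) := by
            refine Finset.sum_congr rfl fun x _ => ?_
            rw [← ee_add, ← ee_add]
            congr 1
            ring
        _ = ee (t * ((a : ℝ) - b)) * ∑ x : Fin N, ee ((x : ℝ) * (((a : ℝ) - b) / N)) := by
            rw [Finset.mul_sum]
        _ = _ := by rw [orth hN a b]
    calc ∑ x : Fin N, ∑ a : Fin N, ∑ b : Fin N,
            ee (((x : ℝ) / N + t) * a) * ee (-((((x : ℝ)) / N + t) * b))
        = ∑ a : Fin N, ∑ b : Fin N, ∑ x : Fin N,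
            ee (((x : ℝ) / N + t) * a) * ee (-((((x : ℝ)) / N + t) * b)) := by
          rw [Finset.sum_comm]
          exact Finset.sum_congr rfl fun a _ => Finset.sum_comm
      _ = ∑ a : Fin N, ∑ b : Fin N, ee (t * ((a : ℝ) - b)) * (if a = b then (N : ℂ) else 0) := by
          exact Finset.sum_congr rfl fun a _ => Finset.sum_congr rfl fun b _ => inner a b
      _ = ∑ _a : Fin N, (N : ℂ) := by
          refine Finset.sum_congr rfl fun a _ => ?_
          simp [mul_ite, mul_zero, Finset.sum_ite_eq, ee_zero]
      _ = ((N : ℝ) * N : ℝ) := by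
          simp [Finset.card_univ]
  have := key
  push_cast at this
  exact_mod_cast this

lemma coord (N : ℕ) (hN : 1 ≤ N) (t d : ℝ) (hd0 : 0 < d) (hd1 : d ≤ 1 / 2)
    (hNd : 1 ≤ (N : ℝ) * Real.sin (π * d) ^ 2) :
    1 - 1 / ((N : ℝ) * Real.sin (π * d) ^ 2) ≤
      ∑ x ∈ Finset.univ.filter (fun x : Fin N => ∃ k : ℤ, |(x : ℝ) / N + t - k| < d),
        ‖(N : ℂ)⁻¹ * SS N ((x : ℝ) / N + t)‖ ^ 2 := by
  have hNpos : (0 : ℝ) < N := by exact_mod_cast hN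
  have hsd : 0 < Real.sin (π * d) :=
    Real.sin_pos_of_pos_of_lt_pi (by positivity) (by nlinarith [Real.pi_pos])
  set P : Fin N → Prop := fun x => ∃ k : ℤ, |(x : ℝ) / N + t - k| < d with hP
  set f : Fin N → ℝ := fun x => ‖(N : ℂ)⁻¹ * SS N ((x : ℝ) / N + t)‖ ^ 2 with hf
  have habs : ∀ x : Fin N, f x = ‖SS N ((x : ℝ) / N + t)‖ ^ 2 / (N : ℝ) ^ 2 := by
    intro x
    rw [hf]
    simp only [norm_mul, norm_inv, Complex.norm_natCast]
    field_simp
  have htot : ∑ x : Fin N, f x = 1 := by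
    simp_rw [habs]
    rw [← Finset.sum_div, parseval N hN t]
    field_simp
  have hsplit := Finset.sum_filter_add_sum_filter_not Finset.univ P f
  have hbad : ∑ x ∈ Finset.univ.filter (fun x => ¬ P x), f x
      ≤ 1 / ((N : ℝ) * Real.sin (π * d) ^ 2) := by
    have hone : ∀ x ∈ Finset.univ.filter (fun x => ¬ P x),
        f x ≤ (1 / Real.sin (π * d) ^ 2) / (N : ℝ) ^ 2 := by
      intro x hx
      have hx' : ∀ k : ℤ, d ≤ |(x : ℝ) / N + t - k| := by
        intro k
        by_contra hlt
        push_neg at hlt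
        exact (Finset.mem_filter.1 hx).2 ⟨k, hlt⟩
      rw [habs]
      have := SS_bad hN hd0 hd1 hx'
      gcongr
    calc ∑ x ∈ Finset.univ.filter (fun x => ¬ P x), f x
        ≤ ∑ _x ∈ Finset.univ.filter (fun x => ¬ P x), (1 / Real.sin (π * d) ^ 2) / (N : ℝ) ^ 2 :=
          Finset.sum_le_sum hone
      _ = (Finset.univ.filter (fun x => ¬ P x)).card * ((1 / Real.sin (π * d) ^ 2) / (N : ℝ) ^ 2) := by
          rw [Finset.sum_const, nsmul_eq_mul]
      _ ≤ (N : ℝ) * ((1 / Real.sin (π * d) ^ 2) / (N : ℝ) ^ 2) := by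
          have hcard : ((Finset.univ.filter (fun x => ¬ P x)).card : ℝ) ≤ N := by
            have := Finset.card_filter_le (Finset.univ : Finset (Fin N)) (fun x => ¬ P x)
            have h2 : (Finset.univ : Finset (Fin N)).card = N := Finset.card_univ.trans (Fintype.card_fin N)
            exact_mod_cast h2 ▸ this
          gcongr
      _ = 1 / ((N : ℝ) * Real.sin (π * d) ^ 2) := by
          rw [div_div]
          rw [one_div, one_div]
          congr 1
          field_simp
  have hgood : ∑ x ∈ Finset.univ.filter P, f x
      = 1 - ∑ x ∈ Finset.univ.filter (fun x => ¬ P x), f x := by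
    rw [← htot, ← hsplit]; ring
  rw [show (Finset.univ.filter (fun x : Fin N => ∃ k : ℤ, |(x : ℝ) / N + t - k| < d))
      = Finset.univ.filter P from rfl, hgood]
  linarith

theorem stmt_12 (N p : ℕ) (hN : 1 ≤ N) (hp : 1 ≤ p) (v : Fin p → ℝ)
    (d : ℝ) (hd0 : 0 < d) (hd1 : d ≤ 1 / 2) (hNd : 1 ≤ (N : ℝ) * Real.sin (π * d) ^ 2)
    (χ : (Fin p → Fin N) → ℂ)
    (hχ : ∀ g : Fin p → Fin N, χ g = ((N : ℂ) ^ p)⁻¹ *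
      ∑ h : Fin p → Fin N, Complex.exp (2 * π * Complex.I *
        ((∑ m : Fin p, ((g m : ℕ) : ℝ) * ((h m : ℕ) : ℝ)) / (N : ℝ) +
         ∑ m : Fin p, v m * ((h m : ℕ) : ℝ)))) :
    (1 - 1 / ((N : ℝ) * Real.sin (π * d) ^ 2)) ^ p ≤
      ∑ g ∈ Finset.univ.filter (fun g : Fin p → Fin N =>
          ∀ m : Fin p, ∃ k : ℤ, |((g m : ℕ) : ℝ) / (N : ℝ) + v m - (k : ℝ)| < d),
        ‖χ g‖ ^ 2 := by
  have hNpos : (0 : ℝ) < N := by exact_mod_cast hN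
  -- factorization of χ
  have hfac : ∀ g : Fin p → Fin N,
      χ g = ∏ m : Fin p, ((N : ℂ)⁻¹ * SS N ((g m : ℝ) / N + v m)) := by
    intro g
    rw [hχ g]
    have hexp : ∀ h : Fin p → Fin N,
        Complex.exp (2 * π * Complex.I *
          ((∑ m : Fin p, ((g m : ℕ) : ℝ) * ((h m : ℕ) : ℝ)) / (N : ℝ) +
           ∑ m : Fin p, v m * ((h m : ℕ) : ℝ)))
        = ∏ m : Fin p, ee (((g m : ℝ) / N + v m) * (h m : ℝ)) := by
      intro h
      rw [← ee_sum]
      rw [ee]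
      congr 1
      have hs : (∑ m : Fin p, ((g m : ℝ) / N + v m) * (h m : ℝ))
          = (∑ m : Fin p, ((g m : ℕ) : ℝ) * ((h m : ℕ) : ℝ)) / (N : ℝ)
            + ∑ m : Fin p, v m * ((h m : ℕ) : ℝ) := by
        rw [Finset.sum_div, ← Finset.sum_add_distrib]
        exact Finset.sum_congr rfl fun m _ => by ring
      rw [hs]
      push_cast
      ring
    simp_rw [hexp]
    rw [← Fintype.prod_sum (fun m (x : Fin N) => ee (((g m : ℝ) / N + v m) * (x : ℝ)))]
    rw [Finset.prod_mul_distrib, Finset.prod_const, Finset.card_univ, Fintype.card_fin,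
      ← inv_pow]
    congr 1
  -- rewrite the summand as a product
  have hsummand : ∀ g : Fin p → Fin N,
      ‖χ g‖ ^ 2
        = ∏ m : Fin p, ‖(N : ℂ)⁻¹ * SS N ((g m : ℝ) / N + v m)‖ ^ 2 := by
    intro g
    rw [hfac g, norm_prod, ← Finset.prod_pow]
  -- the filter set is a piFinset
  set Q : Fin p → Fin N → Prop :=
    fun m x => ∃ k : ℤ, |((x : ℕ) : ℝ) / (N : ℝ) + v m - (k : ℝ)| < d with hQ
  have hset : (Finset.univ.filter (fun g : Fin p → Fin N =>
        ∀ m : Fin p, ∃ k : ℤ, |((g m : ℕ) : ℝ) / (N : ℝ) + v m - (k : ℝ)| < d))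
      = Fintype.piFinset (fun m => Finset.univ.filter (Q m)) := by
    ext g
    simp [Fintype.mem_piFinset, hQ]
  calc (1 - 1 / ((N : ℝ) * Real.sin (π * d) ^ 2)) ^ p
      = ∏ _m : Fin p, (1 - 1 / ((N : ℝ) * Real.sin (π * d) ^ 2)) := by
        rw [Finset.prod_const, Finset.card_univ, Fintype.card_fin]
    _ ≤ ∏ m : Fin p, ∑ x ∈ Finset.univ.filter (Q m),
          ‖(N : ℂ)⁻¹ * SS N ((x : ℝ) / N + v m)‖ ^ 2 := by
        apply Finset.prod_le_prod
        · intro m _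
          have hs2 : 0 < (N : ℝ) * Real.sin (π * d) ^ 2 := by nlinarith
          have : 1 / ((N : ℝ) * Real.sin (π * d) ^ 2) ≤ 1 := by
            rw [div_le_one hs2]; linarith
          linarith
        · intro m _
          exact coord N hN (v m) d hd0 hd1 hNd
    _ = ∑ g ∈ Fintype.piFinset (fun m => Finset.univ.filter (Q m)),
          ∏ m : Fin p, ‖(N : ℂ)⁻¹ * SS N ((g m : ℝ) / N + v m)‖ ^ 2 :=
        Finset.prod_univ_sum _ _
    _ = _ := by
        rw [hset]
        exact Finset.sum_congr rfl fun g _ => (hsummand g).symm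
end
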